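/- Suppose for some constant c > 0 and all large N, r(2s-1, N) \ge N \exp(-c (\log N)^{1/(2s-2)}). Then \tilde{r}(s, 2N) \ge N^2 \exp(-c (\log N)^{1/(2s-2)}) for all large N. -/

import Mathlib

open Real

/-- r(k, N): maximal size of a subset of {1,…,N} free of k-term APs. -/
noncomputable def rAP (k N : ℕ) : ℕ :=
  sSup {n | ∃ A : Finset ℕ, A ⊆ Finset.Icc 1 N ∧
    (¬ ∃ a d : ℕ, 0 < d ∧ ∀ t : ℕ, t ≤ k - 1 → a + t * d ∈ A) ∧ A.card = n}

/-- r̃(s, N): maximal size of a subset of {1,…,N}² free of s×s axes-parallel grids. -/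
noncomputable def rGrid (s N : ℕ) : ℕ :=
  sSup {n | ∃ B : Finset (ℕ × ℕ), B ⊆ Finset.Icc 1 N ×ˢ Finset.Icc 1 N ∧
    (¬ ∃ x y l : ℕ, 0 < l ∧ ∀ i j : ℕ, i ≤ s - 1 → j ≤ s - 1 →
      (x + i * l, y + j * l) ∈ B) ∧ B.card = n}

lemma rAP_mem (k N : ℕ) : ∃ A : Finset ℕ, A ⊆ Finset.Icc 1 N ∧
    (¬ ∃ a d : ℕ, 0 < d ∧ ∀ t : ℕ, t ≤ k - 1 → a + t * d ∈ A) ∧ A.card = rAP k N := by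
  have hne : (0 : ℕ) ∈ {n | ∃ A : Finset ℕ, A ⊆ Finset.Icc 1 N ∧
      (¬ ∃ a d : ℕ, 0 < d ∧ ∀ t : ℕ, t ≤ k - 1 → a + t * d ∈ A) ∧ A.card = n} := by
    refine ⟨∅, by simp, ?_, rfl⟩
    rintro ⟨a, d, hd, hall⟩
    simpa using hall 0 (by omega)
  have hbdd : BddAbove {n | ∃ A : Finset ℕ, A ⊆ Finset.Icc 1 N ∧
      (¬ ∃ a d : ℕ, 0 < d ∧ ∀ t : ℕ, t ≤ k - 1 → a + t * d ∈ A) ∧ A.card = n} := by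
    refine ⟨N, ?_⟩
    rintro n ⟨A, hA, -, rfl⟩
    simpa using (Finset.card_le_card hA).trans (by simp)
  have := Nat.sSup_mem ⟨0, hne⟩ hbdd
  obtain ⟨A, h1, h2, h3⟩ := this
  exact ⟨A, h1, h2, h3⟩

lemma key (s N : ℕ) (hs : 2 ≤ s) : N * rAP (2 * s - 1) N ≤ rGrid s (2 * N) := by
  obtain ⟨A, hA, hfree, hcard⟩ := rAP_mem (2 * s - 1) N
  set B : Finset (ℕ × ℕ) :=
    (Finset.Icc 1 (2 * N) ×ˢ Finset.Icc 1 (2 * N)).filter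
      (fun p => p.1 + p.2 ∈ A.image (· + N)) with hBdef
  have hBsub : B ⊆ Finset.Icc 1 (2 * N) ×ˢ Finset.Icc 1 (2 * N) := Finset.filter_subset _ _
  -- membership characterization
  have hmemB : ∀ p : ℕ × ℕ, p ∈ B ↔ (1 ≤ p.1 ∧ p.1 ≤ 2 * N) ∧ (1 ≤ p.2 ∧ p.2 ≤ 2 * N) ∧
      ∃ a ∈ A, a + N = p.1 + p.2 := by
    intro p
    simp only [hBdef, Finset.mem_filter, Finset.mem_product, Finset.mem_Icc,
      Finset.mem_image]
    tauto
  -- card bound: inject Icc 1 N ×ˢ A into B via (x, a) ↦ (x, a + N - x)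
  have hinj : N * A.card ≤ B.card := by
    have := Finset.card_le_card_of_injOn (f := fun p : ℕ × ℕ => (p.1, p.2 + N - p.1))
      (s := Finset.Icc 1 N ×ˢ A) (t := B)
      (by
        rintro ⟨x, a⟩ hp
        simp only [Finset.mem_coe, Finset.mem_product, Finset.mem_Icc] at hp
        obtain ⟨⟨hx1, hx2⟩, ha⟩ := hp
        have haI := hA ha
        simp only [Finset.mem_Icc] at haI
        dsimp only
        rw [Finset.mem_coe, hmemB]
        refine ⟨⟨hx1, by omega⟩, ⟨by omega, by omega⟩, a, ha, by omega⟩)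
      (by
        rintro ⟨x, a⟩ hp ⟨x', a'⟩ hp' hEq
        simp only [Finset.mem_coe, Finset.mem_product, Finset.mem_Icc] at hp hp'
        simp only [Prod.mk.injEq] at hEq
        obtain ⟨h1, h2⟩ := hEq
        subst h1
        have : a = a' := by omega
        simp [this])
    calc N * A.card = (Finset.Icc 1 N ×ˢ A).card := by
          rw [Finset.card_product, Nat.card_Icc, Nat.add_sub_cancel]
      _ ≤ B.card := this
  -- grid-freeness of B
  have hgridfree : ¬ ∃ x y l : ℕ, 0 < l ∧ ∀ i j : ℕ, i ≤ s - 1 → j ≤ s - 1 →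
      (x + i * l, y + j * l) ∈ B := by
    rintro ⟨x, y, l, hl, hgrid⟩
    apply hfree
    have h00 := hgrid 0 0 (by omega) (by omega)
    rw [hmemB] at h00
    obtain ⟨-, -, a₀, ha₀, ha₀eq⟩ := h00
    simp only [Nat.zero_mul, Nat.add_zero] at ha₀eq
    refine ⟨x + y - N, l, hl, ?_⟩
    intro t ht
    obtain ⟨i, j, hi, hj, hij⟩ : ∃ i j : ℕ, i ≤ s - 1 ∧ j ≤ s - 1 ∧ i + j = t := by
      rcases le_or_gt t (s - 1) with h' | h'
      · exact ⟨t, 0, h', by omega, by omega⟩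
      · exact ⟨s - 1, t - (s - 1), le_rfl, by omega, by omega⟩
    have hmem := hgrid i j hi hj
    rw [hmemB] at hmem
    obtain ⟨-, -, a, ha, haeq⟩ := hmem
    simp only at haeq
    have hmul : i * l + j * l = t * l := by rw [← add_mul, hij]
    have : x + y - N + t * l = a := by omega
    rwa [this]
  -- conclude via sSup
  have hbdd : BddAbove {n | ∃ B : Finset (ℕ × ℕ),
      B ⊆ Finset.Icc 1 (2 * N) ×ˢ Finset.Icc 1 (2 * N) ∧
      (¬ ∃ x y l : ℕ, 0 < l ∧ ∀ i j : ℕ, i ≤ s - 1 → j ≤ s - 1 →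
        (x + i * l, y + j * l) ∈ B) ∧ B.card = n} := by
    refine ⟨2 * N * (2 * N), ?_⟩
    rintro n ⟨B', hB', -, rfl⟩
    have := Finset.card_le_card hB'
    simpa [Nat.card_Icc] using this
  have hBin : B.card ∈ {n | ∃ B : Finset (ℕ × ℕ),
      B ⊆ Finset.Icc 1 (2 * N) ×ˢ Finset.Icc 1 (2 * N) ∧
      (¬ ∃ x y l : ℕ, 0 < l ∧ ∀ i j : ℕ, i ≤ s - 1 → j ≤ s - 1 →
        (x + i * l, y + j * l) ∈ B) ∧ B.card = n} := ⟨B, hBsub, hgridfree, rfl⟩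
  calc N * rAP (2 * s - 1) N = N * A.card := by rw [hcard]
    _ ≤ B.card := hinj
    _ ≤ rGrid s (2 * N) := le_csSup hbdd hBin

theorem stmt14 (s : ℕ) (hs : 2 ≤ s) (c : ℝ) (hc : 0 < c)
    (h : ∃ N₀ : ℕ, ∀ N : ℕ, N₀ ≤ N →
      (rAP (2 * s - 1) N : ℝ) ≥ N * exp (-c * (Real.log N) ^ ((1 : ℝ) / (2 * s - 2)))) :
    ∃ N₁ : ℕ, ∀ N : ℕ, N₁ ≤ N →
      (rGrid s (2 * N) : ℝ) ≥ (N : ℝ) ^ 2 * exp (-c * (Real.log N) ^ ((1 : ℝ) / (2 * s - 2))) := by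
  obtain ⟨N₀, hN₀⟩ := h
  refine ⟨N₀, fun N hN => ?_⟩
  have h1 := hN₀ N hN
  have h2 := key s N hs
  have h3 : (N : ℝ) * rAP (2 * s - 1) N ≤ rGrid s (2 * N) := by exact_mod_cast h2
  have h4 : (N : ℝ) ^ 2 * exp (-c * (Real.log N) ^ ((1 : ℝ) / (2 * s - 2)))
      ≤ (N : ℝ) * rAP (2 * s - 1) N := by
    have := mul_le_mul_of_nonneg_left h1 (Nat.cast_nonneg N)
    calc (N : ℝ) ^ 2 * exp (-c * (Real.log N) ^ ((1 : ℝ) / (2 * s - 2)))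
        = (N : ℝ) * ((N : ℝ) * exp (-c * (Real.log N) ^ ((1 : ℝ) / (2 * s - 2)))) := by ring
      _ ≤ (N : ℝ) * rAP (2 * s - 1) N := this
  linarith
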